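/- arXiv:1408.4433 — 2 statements merged into one kernel-verified Lean document; each statement's English description precedes it below -/
import Mathlib

section
/- Let d ≥ 1, let m ≤ k be positive integers, let δ > 0 with k ≥ 4dm/δ, let C ⊆ Σ^m, and let w ∈ Σ^k. If Σ_{r∈Λ_{k−m+1}} 1[w(Λ_m + r) ∈ C] ≥ (1 − δ/4)(k−m+1)^d, then there exists p ∈ Λ_m such that the number of r ∈ m·ℤ^d with Λ_m + r + p ⊆ Λ_k and w(Λ_m + r + p) ∈ C is at least (1 − δ)(k/m)^d. -/
open MeasureTheory Filter Topology

namespace SRU1408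

/-- A site of the lattice `ℤ_{≥0}^d`. -/
abbrev Site (d : ℕ) := Fin d → ℕ

/-- An infinite array over the alphabet `Fin A`, i.e. an element of `Σ = 𝒜^{ℤ_{≥0}^d}`. -/
abbrev Config (A d : ℕ) := Site d → Fin A

/-- A cubical `k`-word, i.e. an element of `Σ^k = 𝒜^{Λ_k}`. -/
abbrev Word (A d k : ℕ) := (Fin d → Fin k) → Fin A

variable {A d : ℕ}

/-- The pattern of `x` on the cube `Λ_k + c`, as a `k`-word. -/
def wordAt (x : Config A d) (k : ℕ) (c : Site d) : Word A d k :=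
  fun i => x fun j => c j + (i j : ℕ)

/-- The lattice shift `σ_r`. -/
def shift (r : Site d) (x : Config A d) : Config A d := fun i => x (i + r)

/-- Stationarity: invariance under all shifts. -/
def Stationary (μ : Measure (Config A d)) : Prop := ∀ r : Site d, μ.map (shift r) = μ

/-- Ergodicity: stationary, and every measurable set invariant under all shifts is trivial. -/
def ErgodicShift (μ : Measure (Config A d)) : Prop :=
  Stationary μ ∧ ∀ E : Set (Config A d), MeasurableSet E →
    (∀ r : Site d, shift r ⁻¹' E = E) → μ E = 0 ∨ μ E = 1

/-- The `k`-word marginal distribution `μ^k`, as a probability vector on `Σ^k`. -/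
noncomputable def wordDist (μ : Measure (Config A d)) (k : ℕ) : Word A d k → ℝ :=
  fun w => (μ {x | wordAt x k 0 = w}).toReal

/-- Base-`A` entropy of a probability vector. -/
noncomputable def entH (A : ℕ) {W : Type*} [Fintype W] (p : W → ℝ) : ℝ :=
  -∑ w, p w * Real.logb A (p w)

/-- `μ` has entropy rate `h` (base-`A` logarithms): `H(μ^n)/n^d → h`. -/
def HasEntropyRate (μ : Measure (Config A d)) (h : ℝ) : Prop :=
  Tendsto (fun n : ℕ => entH A (wordDist μ n) / (n : ℝ) ^ d) atTop (𝓝 h)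

/-- The pattern of a `k`-word on the sub-cube `Λ_m + c` (junk value outside the range). -/
def subw [NeZero A] {k : ℕ} (w : Word A d k) (m : ℕ) (c : Site d) : Word A d m :=
  fun i => if h : ∀ j, c j + (i j : ℕ) < k then w (fun j => ⟨c j + (i j : ℕ), h j⟩) else 0

lemma arith_bound (d m k : ℕ) (hd : 1 ≤ d) (hm : 0 < m) (hmk : m ≤ k)
    (δ : ℝ) (hδ : 0 < δ) (hδ1 : δ < 1) (hk : 4 * (d : ℝ) * (m : ℝ) ≤ δ * (k : ℝ)) :
    (1 - δ) * ((k:ℝ)/(m:ℝ))^d ≤ (1 - δ/4) * (((k - m + 1 : ℕ)):ℝ)^d / (m:ℝ)^d := by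
  set N := k - m + 1 with hNdef
  have hk0 : 0 < k := lt_of_lt_of_le hm hmk
  have hNcast : (N:ℝ) = (k:ℝ) - (m:ℝ) + 1 := by
    simp only [hNdef]
    push_cast [Nat.cast_sub hmk]
    ring
  have hd0 : (0:ℝ) < d := by exact_mod_cast hd
  have hd1 : (1:ℝ) ≤ (d:ℝ) := by exact_mod_cast hd
  have hm0 : (0:ℝ) < m := by exact_mod_cast hm
  have hk0' : (0:ℝ) < k := by exact_mod_cast hk0
  set a : ℝ := δ / (4 * d) with hadef
  have ha0 : 0 < a := by positivity
  have ha1 : a < 1 := by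
    rw [hadef, div_lt_one (by positivity)]
    nlinarith
  have hbern : 1 - δ/4 ≤ (1 - a)^d := by
    have := one_add_mul_le_pow (a := -a) (by linarith) d
    have hda : (d:ℝ) * a = δ/4 := by
      rw [hadef]; field_simp
    calc 1 - δ/4 = 1 + (d:ℝ) * (-a) := by rw [mul_neg, hda]; ring
      _ ≤ (1 + (-a))^d := this
      _ = (1 - a)^d := by ring_nf
  have hNk : 1 - a ≤ (N:ℝ)/(k:ℝ) := by
    rw [le_div_iff₀ hk0']
    have hma : (m:ℝ) ≤ (k:ℝ) * a := by
      have h4d : (0:ℝ) < 4 * (d:ℝ) := by positivity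
      rw [hadef, mul_div_assoc', le_div_iff₀ h4d]
      nlinarith
    rw [hNcast]
    nlinarith
  have hNkpow : (1 - a)^d ≤ ((N:ℝ)/(k:ℝ))^d :=
    pow_le_pow_left₀ (by linarith) hNk d
  have key : 1 - δ ≤ (1 - δ/4) * ((N:ℝ)/(k:ℝ))^d := by
    have hX : 1 - δ/4 ≤ ((N:ℝ)/(k:ℝ))^d := le_trans hbern hNkpow
    nlinarith [sq_nonneg δ]
  calc (1 - δ) * ((k:ℝ)/(m:ℝ))^d
      ≤ ((1 - δ/4) * ((N:ℝ)/(k:ℝ))^d) * ((k:ℝ)/(m:ℝ))^d :=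
        mul_le_mul_of_nonneg_right key (by positivity)
    _ = (1 - δ/4) * (N:ℝ)^d / (m:ℝ)^d := by
        rw [div_pow, div_pow]
        field_simp

/-- Lemma 3.2 of the universally typical sets paper. If a `(1-δ/4)`-fraction
of all `m`-sub-blocks of `Λ_k` carry words from `C`, then for some offset `p ∈ Λ_m` at least
`(1-δ)(k/m)^d` blocks of the `p`-shifted regular `m`-grid carry words from `C`. -/
theorem grid_alignment
    (A d : ℕ) [NeZero A] (hA : 2 ≤ A) (hd : 1 ≤ d)
    (m k : ℕ) (hm : 0 < m) (hmk : m ≤ k)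
    (δ : ℝ) (hδ : 0 < δ) (hk : 4 * (d : ℝ) * (m : ℝ) ≤ δ * (k : ℝ))
    (C : Set (Word A d m)) (w : Word A d k)
    (hcount : (1 - δ / 4) * ((k - m + 1 : ℕ) : ℝ) ^ d ≤
      (Set.ncard {r : Site d | (∀ j, r j < k - m + 1) ∧ subw w m r ∈ C} : ℝ)) :
    ∃ p : Site d, (∀ j, p j < m) ∧
      (1 - δ) * ((k : ℝ) / (m : ℝ)) ^ d ≤
        (Set.ncard {r : Site d | (∀ j, m * r j + p j + m ≤ k) ∧
          subw w m (fun j => m * r j + p j) ∈ C} : ℝ) := by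
  classical
  by_cases hδ1 : 1 ≤ δ
  · refine ⟨fun _ => 0, fun _ => hm, ?_⟩
    have h2 : (0:ℝ) ≤ ((k:ℝ)/(m:ℝ))^d := by positivity
    have := mul_nonpos_of_nonpos_of_nonneg (by linarith : (1-δ:ℝ) ≤ 0) h2
    exact this.trans (Nat.cast_nonneg _)
  push_neg at hδ1
  set N := k - m + 1 with hNdef
  set G : Set (Site d) := {r : Site d | (∀ j, r j < N) ∧ subw w m r ∈ C} with hGdef
  set S : Site d → Set (Site d) := fun p => {r : Site d | (∀ j, m * r j + p j + m ≤ k) ∧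
          subw w m (fun j => m * r j + p j) ∈ C} with hSdef
  have hk0 : 0 < k := lt_of_lt_of_le hm hmk
  -- finiteness
  have hGfin : G.Finite := by
    apply Set.Finite.subset (Set.Finite.pi (fun _ : Fin d => Set.finite_Iio N))
    intro r hr
    simpa [Set.mem_pi] using hr.1
  have hSfin : ∀ p, (S p).Finite := by
    intro p
    apply Set.Finite.subset (Set.Finite.pi (fun _ : Fin d => Set.finite_Iio k))
    intro r hr
    simp only [Set.mem_pi, Set.mem_univ, Set.mem_Iio, forall_true_left]
    intro j
    have := hr.1 j
    have h1 : r j ≤ m * r j := Nat.le_mul_of_pos_left _ hm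
    omega
  -- finsets
  set P : Finset (Site d) := Fintype.piFinset fun _ : Fin d => Finset.range m with hPdef
  have hPcard : P.card = m ^ d := by simp [hPdef, Fintype.card_piFinset]
  have hPne : P.Nonempty := ⟨fun _ => 0, by simp [hPdef, Fintype.mem_piFinset, hm]⟩
  set f : Site d → Site d → Site d := fun p r j => m * r j + p j with hfdef
  -- covering
  have hcover : hGfin.toFinset ⊆ P.biUnion fun p => ((hSfin p).toFinset.image (f p)) := by
    intro s hs
    rw [Set.Finite.mem_toFinset] at hs
    obtain ⟨hs1, hs2⟩ := hs
    set p : Site d := fun j => s j % m with hpdef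
    set r : Site d := fun j => s j / m with hrdef
    have hfr : f p r = s := by
      funext j
      simp only [hfdef, hpdef, hrdef]
      exact Nat.div_add_mod (s j) m
    refine Finset.mem_biUnion.2 ⟨p, ?_, Finset.mem_image.2 ⟨r, ?_, hfr⟩⟩
    · simp only [hPdef, Fintype.mem_piFinset, Finset.mem_range, hpdef]
      intro j; exact Nat.mod_lt _ hm
    · rw [Set.Finite.mem_toFinset]
      have heq : (fun j => m * r j + p j) = s := hfr
      constructor
      · intro j
        have : m * r j + p j = s j := congrFun hfr j
        have := hs1 j
        omega
      · rw [heq]; exact hs2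
  -- card bound
  have hcard : (hGfin.toFinset.card : ℝ) ≤ ∑ p ∈ P, ((hSfin p).toFinset.card : ℝ) := by
    have h1 : hGfin.toFinset.card ≤ ∑ p ∈ P, ((hSfin p).toFinset.image (f p)).card :=
      le_trans (Finset.card_le_card hcover) Finset.card_biUnion_le
    have h2 : ∑ p ∈ P, ((hSfin p).toFinset.image (f p)).card ≤
        ∑ p ∈ P, (hSfin p).toFinset.card :=
      Finset.sum_le_sum fun p _ => Finset.card_image_le
    exact_mod_cast le_trans h1 h2
  -- pigeonhole
  have hsum : ∑ _p ∈ P, (1 - δ/4) * (N:ℝ)^d / (m:ℝ)^d ≤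
      ∑ p ∈ P, ((hSfin p).toFinset.card : ℝ) := by
    rw [Finset.sum_const, hPcard, nsmul_eq_mul]
    have hm0 : (0:ℝ) < (m:ℝ)^d := by positivity
    have : ((m:ℝ)^d) * ((1 - δ/4) * (N:ℝ)^d / (m:ℝ)^d) = (1 - δ/4) * (N:ℝ)^d := by
      field_simp
    rw [Nat.cast_pow, this]
    refine le_trans ?_ hcard
    rw [Set.ncard_eq_toFinset_card G hGfin] at hcount
    convert hcount using 2
  obtain ⟨p, hpP, hple⟩ := Finset.exists_le_of_sum_le hPne hsum
  have hpm : ∀ j, p j < m := by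
    intro j
    have := hpP
    simp only [hPdef, Fintype.mem_piFinset, Finset.mem_range] at this
    exact this j
  refine ⟨p, hpm, ?_⟩
  rw [Set.ncard_eq_toFinset_card (S p) (hSfin p)]
  refine le_trans (arith_bound d m k hd hm hmk δ hδ hδ1 hk) ?_
  exact_mod_cast hple


end SRU1408
end

section
/- Let d ≥ 1, let m < k < n be positive integers with (k−m+1)^d ≥ (2/3)·k^d, let δ, δ′, β ∈ (0,1), let C ⊆ Σ^m, and let x^n ∈ Σ^n satisfy Σ_{r∈Λ_{n−m+1}} 1[x^n(Λ_m + r) ∈ C] ≥ (1 − δ′δβ/6)·n^d. Let λ_1, …, λ_I be pairwise disjoint translates of Λ_k contained in Λ_n with I·k^d ≥ β·n^d. Then for at least (1−δ′)·I of the indices i ∈ {1,…,I}, the word w_i = x^n(λ_i) satisfies Σ_{s∈Λ_{k−m+1}} 1[w_i(Λ_m + s) ∈ C] ≥ (1 − δ/4)·(k−m+1)^d. -/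
open MeasureTheory Filter Topology

namespace SRU1408

variable {A d : ℕ}

/-- The cube `Λ_N` as a finset of sites. -/
def box (d N : ℕ) : Finset (Site d) := Fintype.piFinset fun _ => Finset.range N

lemma mem_box {d N : ℕ} {r : Site d} : r ∈ box d N ↔ ∀ j, r j < N := by
  simp [box, Fintype.mem_piFinset]

lemma card_box (d N : ℕ) : (box d N).card = N ^ d := by
  simp [box, Fintype.card_piFinset]

lemma ncard_box_filter {d N : ℕ} (P : Site d → Prop) [DecidablePred P] :
    {r : Site d | (∀ j, r j < N) ∧ P r}.ncard = ((box d N).filter P).card := by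
  rw [← Set.ncard_coe_finset]
  congr 1
  ext r
  simp [mem_box]

lemma subw_comp {A d : ℕ} [NeZero A] {m k n : ℕ} (xw : Word A d n) (c s : Site d)
    (hm : 0 < m) (hmk : m ≤ k) (hck : ∀ j, c j + k ≤ n) (hs : ∀ j, s j < k - m + 1) :
    subw (subw xw k c) m s = subw xw m (fun j => c j + s j) := by
  funext i
  have h1 : ∀ j, s j + (i j : ℕ) < k := fun j => by
    have := (i j).2; have := hs j; omega
  have h2 : ∀ j, (c j + s j) + (i j : ℕ) < n := fun j => by
    have := h1 j; have := hck j; omega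
  have h3 : ∀ j, c j + (s j + (i j : ℕ)) < n := fun j => by
    have := h2 j; omega
  simp only [subw, dif_pos h1, dif_pos h2, dif_pos h3]
  congr 1
  funext j
  exact Fin.ext (Nat.add_assoc _ _ _).symm

lemma arith_step (δ δ' β nd kd Kv Bc Fc : ℝ) (hδ0 : 0 < δ) (hδ'0 : 0 < δ')
    (hβ0 : 0 < β) (hB0 : 0 ≤ Bc) (hkd : 0 < kd) (hK : (2/3) * kd ≤ Kv)
    (h1 : Bc * ((δ/4) * Kv) ≤ (δ' * δ * β / 6) * nd) (hv : β * nd ≤ Fc * kd) :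
    Bc ≤ δ' * Fc := by
  have a : (δ/4) * ((2/3) * kd) ≤ (δ/4) * Kv :=
    mul_le_mul_of_nonneg_left hK (by linarith)
  have b : Bc * ((δ/4) * ((2/3) * kd)) ≤ Bc * ((δ/4) * Kv) :=
    mul_le_mul_of_nonneg_left a hB0
  have c : (δ' * δ / 6) * (β * nd) ≤ (δ' * δ / 6) * (Fc * kd) :=
    mul_le_mul_of_nonneg_left hv (by positivity)
  have key : Bc * ((δ/6) * kd) ≤ (δ' * Fc) * ((δ/6) * kd) := by nlinarith
  have h6 : (0:ℝ) < (δ/6) * kd := by positivity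
  exact le_of_mul_le_mul_right key h6

/-- If all but a `δ'δβ/6`-fraction of the `m`-sub-blocks of `Λ_n` carry
words from `C`, then in any family of pairwise disjoint `k`-blocks in `Λ_n` covering at least
a `β`-fraction of `Λ_n`, at least a `(1-δ')`-fraction of the blocks hold words having at
least a `(1-δ/4)`-fraction of their `m`-sub-blocks carrying words from `C`. -/
theorem most_blocks_mostly_typical
    (A d : ℕ) [NeZero A] (hA : 2 ≤ A) (hd : 1 ≤ d)
    (m k n : ℕ) (hm : 0 < m) (hmk : m < k) (hkn : k < n)
    (hbulk : (2 / 3 : ℝ) * (k : ℝ) ^ d ≤ ((k - m + 1 : ℕ) : ℝ) ^ d)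
    (δ δ' β : ℝ) (hδ0 : 0 < δ) (hδ1 : δ < 1) (hδ'0 : 0 < δ') (hδ'1 : δ' < 1)
    (hβ0 : 0 < β) (hβ1 : β < 1)
    (C : Set (Word A d m)) (xw : Word A d n)
    (hx : (1 - δ' * δ * β / 6) * (n : ℝ) ^ d ≤
      (Set.ncard {r : Site d | (∀ j, r j < n - m + 1) ∧ subw xw m r ∈ C} : ℝ))
    (F : Finset (Site d))
    (hsub : ∀ c ∈ F, ∀ j, c j + k ≤ n)
    (hdisj : ∀ c ∈ F, ∀ c' ∈ F, c ≠ c' → (∃ j, c j + k ≤ c' j ∨ c' j + k ≤ c j))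
    (hvol : β * (n : ℝ) ^ d ≤ (F.card : ℝ) * (k : ℝ) ^ d) :
    (1 - δ') * (F.card : ℝ) ≤
      (Set.ncard {c : Site d | c ∈ F ∧
        (1 - δ / 4) * ((k - m + 1 : ℕ) : ℝ) ^ d ≤
          (Set.ncard {s : Site d | (∀ j, s j < k - m + 1) ∧
            subw (subw xw k c) m s ∈ C} : ℝ)} : ℝ) := by
  classical
  have hmn : m < n := hmk.trans hkn
  set ε : ℝ := δ' * δ * β / 6 with hε
  set K : ℝ := ((k - m + 1 : ℕ) : ℝ) ^ d with hKdef
  have hk0 : (0:ℝ) < (k:ℝ) := by exact_mod_cast (by omega : 0 < k)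
  have hkd : (0:ℝ) < (k:ℝ) ^ d := pow_pos hk0 d
  have hKpos : (0:ℝ) < K := by nlinarith
  -- global good/bad counts
  have hxcard : (1 - ε) * (n : ℝ) ^ d ≤
      (((box d (n - m + 1)).filter (fun r => subw xw m r ∈ C)).card : ℝ) := by
    rwa [ncard_box_filter (fun r => subw xw m r ∈ C)] at hx
  set Bad : Finset (Site d) :=
    (box d (n - m + 1)).filter (fun r => ¬ subw xw m r ∈ C) with hBadDef
  have hsplit : ((box d (n - m + 1)).filter (fun r => subw xw m r ∈ C)).card + Bad.card
      = (n - m + 1) ^ d := by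
    rw [hBadDef, Finset.card_filter_add_card_filter_not, card_box]
  have hBadle : (Bad.card : ℝ) ≤ ε * (n : ℝ) ^ d := by
    have h1 : ((n - m + 1 : ℕ) : ℝ) ^ d ≤ (n : ℝ) ^ d := by
      apply pow_le_pow_left₀ (by positivity)
      exact_mod_cast Nat.le_of_lt_succ (by omega)
    have h2 : (((box d (n - m + 1)).filter (fun r => subw xw m r ∈ C)).card : ℝ)
        + (Bad.card : ℝ) = ((n - m + 1 : ℕ) : ℝ) ^ d := by
      exact_mod_cast congrArg (Nat.cast : ℕ → ℝ) hsplit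
    linarith
  -- rewrite the goal as a Finset count
  have hgoalset : {c : Site d | c ∈ F ∧
        (1 - δ / 4) * ((k - m + 1 : ℕ) : ℝ) ^ d ≤
          (Set.ncard {s : Site d | (∀ j, s j < k - m + 1) ∧
            subw (subw xw k c) m s ∈ C} : ℝ)}
      = ↑(F.filter (fun c =>
        (1 - δ / 4) * ((k - m + 1 : ℕ) : ℝ) ^ d ≤
          (Set.ncard {s : Site d | (∀ j, s j < k - m + 1) ∧
            subw (subw xw k c) m s ∈ C} : ℝ))) := by
    ext c; simp
  rw [hgoalset, Set.ncard_coe_finset]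
  set Pc : Site d → Prop := fun c =>
        (1 - δ / 4) * ((k - m + 1 : ℕ) : ℝ) ^ d ≤
          (Set.ncard {s : Site d | (∀ j, s j < k - m + 1) ∧
            subw (subw xw k c) m s ∈ C} : ℝ) with hPc
  set BadF : Finset (Site d) := F.filter (fun c => ¬ Pc c) with hBadF
  have hFsplit : (F.filter Pc).card + BadF.card = F.card := by
    rw [hBadF, Finset.card_filter_add_card_filter_not]
  -- local bad sub-block counts
  set badsub : Site d → Finset (Site d) := fun c =>
    (box d (k - m + 1)).filter (fun s => ¬ subw (subw xw k c) m s ∈ C) with hbadsub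
  have hlocal : ∀ c ∈ BadF, (δ / 4) * K ≤ ((badsub c).card : ℝ) := by
    intro c hc
    rw [hBadF, Finset.mem_filter] at hc
    have hnot := hc.2
    rw [hPc] at hnot
    push_neg at hnot
    rw [ncard_box_filter (fun s => subw (subw xw k c) m s ∈ C)] at hnot
    have hsp : (((box d (k - m + 1)).filter
          (fun s => subw (subw xw k c) m s ∈ C)).card : ℝ)
        + ((badsub c).card : ℝ) = K := by
      rw [hKdef]
      have := Finset.card_filter_add_card_filter_not
        (s := box d (k - m + 1)) (p := fun s => subw (subw xw k c) m s ∈ C)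
      rw [card_box] at this
      exact_mod_cast congrArg (Nat.cast : ℕ → ℝ) this
    rw [hKdef] at hsp ⊢
    linarith
  -- injection of bad sub-blocks of bad blocks into the global bad set
  have hinj : (BadF.sigma badsub).card ≤ Bad.card := by
    apply Finset.card_le_card_of_injOn (fun a => fun j => a.1 j + a.2 j)
    · rintro ⟨c, s⟩ ha
      rw [Finset.mem_coe, Finset.mem_sigma] at ha
      obtain ⟨hcB, hsB⟩ := ha
      rw [hBadF, Finset.mem_filter] at hcB
      simp only [hbadsub, Finset.mem_filter, mem_box] at hsB
      have hcF := hcB.1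
      have hck := hsub c hcF
      dsimp only
      rw [hBadDef, Finset.mem_coe, Finset.mem_filter, mem_box]
      constructor
      · intro j
        have := hck j; have h2 := hsB.1 j; omega
      · rw [← subw_comp xw c s hm hmk.le hck hsB.1]
        exact hsB.2
    · rintro ⟨c, s⟩ ha ⟨c', s'⟩ hb hab
      simp only [Finset.coe_sigma, Set.mem_sigma_iff] at ha hb
      have hcF : c ∈ F := by
        have h := ha.1
        simp only [hBadF, Finset.mem_coe, Finset.mem_filter] at h
        exact h.1
      have hcF' : c' ∈ F := by
        have h := hb.1
        simp only [hBadF, Finset.mem_coe, Finset.mem_filter] at h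
        exact h.1
      have hsB : ∀ j, s j < k - m + 1 := by
        have h := ha.2
        simp only [hbadsub, Finset.mem_coe, Finset.mem_filter, mem_box] at h
        exact h.1
      have hsB' : ∀ j, s' j < k - m + 1 := by
        have h := hb.2
        simp only [hbadsub, Finset.mem_coe, Finset.mem_filter, mem_box] at h
        exact h.1
      have hcc : c = c' := by
        by_contra hne
        obtain ⟨j, hj⟩ := hdisj c hcF c' hcF' hne
        have heq : c j + s j = c' j + s' j := by
          have := congrFun hab j; simpa using this
        have h1 := hsB j; have h2 := hsB' j
        rcases hj with hj | hj <;> omega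
      subst hcc
      have hss : s = s' := by
        funext j
        have heq : c j + s j = c j + s' j := by
          have := congrFun hab j; simpa using this
        omega
      subst hss
      rfl
  have hsum : ∑ c ∈ BadF, ((badsub c).card : ℝ) ≤ (Bad.card : ℝ) := by
    have : ∑ c ∈ BadF, (badsub c).card = (BadF.sigma badsub).card := by
      rw [Finset.card_sigma]
    calc ∑ c ∈ BadF, ((badsub c).card : ℝ)
        = ((∑ c ∈ BadF, (badsub c).card : ℕ) : ℝ) := by push_cast; ring
      _ ≤ (Bad.card : ℝ) := by exact_mod_cast this ▸ hinj
  have hlb : (BadF.card : ℝ) * ((δ / 4) * K) ≤ ∑ c ∈ BadF, ((badsub c).card : ℝ) := by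
    calc (BadF.card : ℝ) * ((δ / 4) * K) = ∑ _c ∈ BadF, (δ / 4) * K := by
          rw [Finset.sum_const, nsmul_eq_mul]
      _ ≤ _ := Finset.sum_le_sum hlocal
  -- arithmetic
  have hkey : (BadF.card : ℝ) ≤ δ' * (F.card : ℝ) := by
    have hB0 : (0:ℝ) ≤ (BadF.card : ℝ) := Nat.cast_nonneg _
    have h1 : (BadF.card : ℝ) * ((δ / 4) * K) ≤ (δ' * δ * β / 6) * (n:ℝ)^d := by
      rw [hε] at hBadle; linarith
    exact arith_step δ δ' β ((n:ℝ)^d) ((k:ℝ)^d) K _ _ hδ0 hδ'0 hβ0 hB0 hkd hbulk h1 hvol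
  have hFcast : ((F.filter Pc).card : ℝ) + (BadF.card : ℝ) = (F.card : ℝ) := by
    exact_mod_cast congrArg (Nat.cast : ℕ → ℝ) hFsplit
  linarith


end SRU1408
end
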